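/- Let A be a d-th order CP tensor with factor matrices U_p ∈ ℝ^{n_p×R}, and let k be an integer with 1 ≤ k ≤ ∏_{p=1}^d n_p. Consider the optimization problem: minimize Σ_{j=1}^k Σ_{r=1}^R ∏_{p=1}^d ( Σ_{l=1}^{n_p} U_p(l,r)·X_p(l,j)² ) over families of matrices X_p ∈ ℝ^{n_p×k} (p = 1,…,d) subject to ‖X_p(:,j)‖₂ = 1 for all p and j, and ∏_{p=1}^d ⟨X_p(:,i), X_p(:,j)⟩ = 0 for all i ≠ j. Then this minimum is attained and equals the sum of the k smallest entries of A. -/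

import Mathlib

open Finset

lemma prodsum {d : ℕ} {n : Fin d → ℕ} (f : ∀ p : Fin d, Fin (n p) → ℝ) :
    ∏ p, ∑ l, f p l = ∑ i : (∀ p : Fin d, Fin (n p)), ∏ p, f p (i p) := by
  rw [Finset.prod_univ_sum]
  rw [Fintype.piFinset_univ]

lemma polytope {ι : Type*} [Fintype ι] (A c : ι → ℝ) (k : ℕ)
    (hk : k ≤ Fintype.card ι) (hc0 : ∀ i, 0 ≤ c i) (hc1 : ∀ i, c i ≤ 1)
    (hsum : ∑ i, c i = k) :
    ∃ φ : Fin k → ι, Function.Injective φ ∧ ∑ j, A (φ j) ≤ ∑ i, c i * A i := by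
  classical
  set N := Fintype.card ι with hN
  obtain ⟨e⟩ : Nonempty (Fin N ≃ ι) := ⟨(Fintype.equivFin ι).symm⟩
  set σ := Tuple.sort (A ∘ e) with hσ
  set g : Fin N → ℝ := (A ∘ e) ∘ σ with hg
  have hmono : Monotone g := Tuple.monotone_sort (A ∘ e)
  set c' : Fin N → ℝ := fun m => c (e (σ m)) with hc'
  have hEq : ∀ (f : ι → ℝ), ∑ m : Fin N, f (e (σ m)) = ∑ i, f i := by
    intro f
    exact Fintype.sum_equiv ((σ : Equiv.Perm (Fin N)).trans e) _ _ (fun m => rfl)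
  refine ⟨fun j => e (σ (Fin.castLE hk j)), ?_, ?_⟩
  · intro a b hab
    exact Fin.castLE_injective hk (σ.injective (e.injective hab))
  rcases Nat.eq_zero_or_pos k with h0 | hpos
  · subst h0
    have hz : ∀ i, c i = 0 := fun i =>
      (Finset.sum_eq_zero_iff_of_nonneg (fun i _ => hc0 i)).mp (by rw [hsum]; norm_num) i
        (Finset.mem_univ i)
    simp [hz]
  · set S : Finset (Fin N) := Finset.image (Fin.castLE hk) Finset.univ with hS
    have hmemS : ∀ m : Fin N, m ∈ S ↔ (m : ℕ) < k := by
      intro m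
      constructor
      · intro hm
        simp only [hS, Finset.mem_image, Finset.mem_univ, true_and] at hm
        obtain ⟨j, hj⟩ := hm
        rw [← hj]; exact j.isLt
      · intro hm
        simp only [hS, Finset.mem_image, Finset.mem_univ, true_and]
        exact ⟨⟨m, hm⟩, rfl⟩
    have hcardS : S.card = k := by
      rw [hS, Finset.card_image_of_injective _ (Fin.castLE_injective hk), Finset.card_univ,
        Fintype.card_fin]
    have hkN : k - 1 < N := lt_of_lt_of_le (Nat.sub_lt hpos one_pos) hk
    set t : ℝ := g ⟨k - 1, hkN⟩ with ht
    have hsum' : ∑ m, c' m = (k : ℝ) := (hEq c).trans hsum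
    set χ : Fin N → ℝ := fun m => if m ∈ S then 1 else 0 with hχ
    have hχsum : ∑ m, χ m = (k : ℝ) := by
      rw [hχ]
      simp only [Finset.sum_ite_mem, Finset.univ_inter, Finset.sum_const, nsmul_eq_mul, mul_one]
      rw [hcardS]
    have key : ∀ m : Fin N, 0 ≤ (c' m - χ m) * (g m - t) := by
      intro m
      by_cases hm : m ∈ S
      · have h1 : c' m ≤ 1 := hc1 _
        have hmk : (m : ℕ) < k := (hmemS m).mp hm
        have h2 : g m ≤ t := hmono (by
          show m ≤ (⟨k - 1, hkN⟩ : Fin N)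
          rw [Fin.le_def]
          exact Nat.le_sub_one_of_lt hmk)
        rw [hχ]; simp only [if_pos hm]
        nlinarith
      · have h1 : 0 ≤ c' m := hc0 _
        have hmk : k ≤ (m : ℕ) := le_of_not_gt (fun h => hm ((hmemS m).mpr h))
        have h2 : t ≤ g m := hmono (by
          show (⟨k - 1, hkN⟩ : Fin N) ≤ m
          rw [Fin.le_def]
          exact le_trans (Nat.sub_le k 1) hmk)
        rw [hχ]; simp only [if_neg hm]
        nlinarith
    have hkey : 0 ≤ ∑ m, (c' m - χ m) * (g m - t) :=
      Finset.sum_nonneg fun m _ => key m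
    have hexp : ∑ m, (c' m - χ m) * (g m - t)
        = (∑ m, c' m * g m) - (∑ m, χ m * g m) - ((∑ m, c' m) - ∑ m, χ m) * t := by
      rw [sub_mul, Finset.sum_mul, Finset.sum_mul, ← Finset.sum_sub_distrib,
        ← Finset.sum_sub_distrib, ← Finset.sum_sub_distrib]
      exact Finset.sum_congr rfl fun m _ => by ring
    have hχg : ∑ m, χ m * g m = ∑ j : Fin k, g (Fin.castLE hk j) := by
      rw [hχ]
      simp only [ite_mul, one_mul, zero_mul]
      rw [Finset.sum_ite_mem, Finset.univ_inter, hS,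
        Finset.sum_image (fun a _ b _ h => Fin.castLE_injective hk h)]
    have hfin : ∑ m, c' m * g m = ∑ i, c i * A i := hEq (fun i => c i * A i)
    have : ∑ j : Fin k, A (e (σ (Fin.castLE hk j))) = ∑ j : Fin k, g (Fin.castLE hk j) := rfl
    rw [this]
    have := hkey
    rw [hexp, hsum', hχsum, sub_self, zero_mul, sub_zero] at this
    linarith [hfin, hχg, this]

lemma bessel {d k : ℕ} {n : Fin d → ℕ} (X : ∀ p : Fin d, Matrix (Fin (n p)) (Fin k) ℝ)
    (hX1 : ∀ (p : Fin d) (j : Fin k), ∑ l, (X p l j) ^ 2 = 1)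
    (hX2 : ∀ i j : Fin k, i ≠ j → ∏ p : Fin d, (∑ l, X p l i * X p l j) = 0)
    (i : ∀ p : Fin d, Fin (n p)) :
    ∑ j : Fin k, (∏ p, X p (i p) j) ^ 2 ≤ 1 := by
  classical
  set Y : Fin k → EuclideanSpace ℝ (∀ p : Fin d, Fin (n p)) :=
    fun j => WithLp.toLp 2 (fun i => ∏ p, X p (i p) j) with hY
  have hinner : ∀ a b : Fin k, (inner ℝ (Y a) (Y b) : ℝ) = ∏ p, ∑ l, X p l a * X p l b := by
    intro a b
    rw [PiLp.inner_apply]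
    rw [prodsum (fun p l => X p l a * X p l b)]
    refine Finset.sum_congr rfl fun x _ => ?_
    simp only [RCLike.inner_apply, conj_trivial, hY, PiLp.toLp_apply]
    rw [← Finset.prod_mul_distrib]
    exact Finset.prod_congr rfl fun p _ => mul_comm _ _
  have honb : Orthonormal ℝ Y := by
    rw [orthonormal_iff_ite]
    intro a b
    rcases eq_or_ne a b with rfl | hab
    · rw [if_pos rfl, hinner]
      have : ∀ p : Fin d, ∑ l, X p l a * X p l a = 1 := by
        intro p
        rw [← hX1 p a]
        exact Finset.sum_congr rfl fun l _ => (sq (X p l a)).symm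
      simp [this]
    · rw [if_neg hab, hinner]
      exact hX2 a b hab
  have hb := honb.sum_inner_products_le (EuclideanSpace.single i (1:ℝ)) (s := Finset.univ)
  have hsingle : ∀ j : Fin k, (inner ℝ (Y j) (EuclideanSpace.single i (1:ℝ)) : ℝ) = Y j i := by
    intro j
    rw [EuclideanSpace.inner_single_right]
    simp
  calc ∑ j : Fin k, (∏ p, X p (i p) j) ^ 2
      = ∑ j : Fin k, ‖(inner ℝ (Y j) (EuclideanSpace.single i (1:ℝ)) : ℝ)‖ ^ 2 := by
        refine Finset.sum_congr rfl fun j _ => ?_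
        rw [hsingle, Real.norm_eq_abs, sq_abs]
    _ ≤ ‖EuclideanSpace.single i (1:ℝ)‖ ^ 2 := hb
    _ = 1 := by rw [EuclideanSpace.norm_single]; norm_num

/-- The minimum of the continuous constrained reformulation is
attained and equals the sum of the `k` smallest entries of the CP tensor `A`. -/
theorem stmt_3 (d R k : ℕ) (n : Fin d → ℕ)
    (U : ∀ p : Fin d, Matrix (Fin (n p)) (Fin R) ℝ)
    (hk1 : 1 ≤ k) (hk2 : k ≤ ∏ p, n p) :
    ∃ m : ℝ,
      IsLeast {s : ℝ | ∃ φ : Fin k → (∀ p : Fin d, Fin (n p)),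
          Function.Injective φ ∧
          s = ∑ j : Fin k, ∑ r : Fin R, ∏ p : Fin d, U p (φ j p) r} m ∧
      IsLeast {v : ℝ | ∃ X : ∀ p : Fin d, Matrix (Fin (n p)) (Fin k) ℝ,
          (∀ (p : Fin d) (j : Fin k), ∑ l, (X p l j) ^ 2 = 1) ∧
          (∀ i j : Fin k, i ≠ j → ∏ p : Fin d, (∑ l, X p l i * X p l j) = 0) ∧
          v = ∑ j : Fin k, ∑ r : Fin R,
              ∏ p : Fin d, (∑ l, U p l r * (X p l j) ^ 2)} m := by
  classical
  have hcard : k ≤ Fintype.card (∀ p : Fin d, Fin (n p)) := by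
    simpa [Fintype.card_pi] using hk2
  set val : (Fin k → ∀ p : Fin d, Fin (n p)) → ℝ :=
    fun φ => ∑ j : Fin k, ∑ r : Fin R, ∏ p : Fin d, U p (φ j p) r with hval
  set F : Finset ℝ :=
    Finset.image val (Finset.univ.filter fun φ => Function.Injective φ) with hF
  have hFne : F.Nonempty := by
    obtain ⟨f⟩ := Function.Embedding.nonempty_of_card_le
      (by simpa using hcard : Fintype.card (Fin k) ≤ Fintype.card (∀ p : Fin d, Fin (n p)))
    exact ⟨val f, Finset.mem_image_of_mem _ (Finset.mem_filter.mpr ⟨Finset.mem_univ _, f.injective⟩)⟩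
  refine ⟨F.min' hFne, ?_, ?_, ?_⟩
  · -- least of the first set
    constructor
    · obtain ⟨φ, hφ, hv⟩ := Finset.mem_image.mp (F.min'_mem hFne)
      exact ⟨φ, (Finset.mem_filter.mp hφ).2, hv.symm⟩
    · rintro s ⟨φ, hinj, rfl⟩
      exact F.min'_le _ (Finset.mem_image_of_mem _
        (Finset.mem_filter.mpr ⟨Finset.mem_univ _, hinj⟩))
  · -- membership in the second set
    obtain ⟨φ₀, hφ₀, hv₀⟩ := Finset.mem_image.mp (F.min'_mem hFne)
    have hinj₀ : Function.Injective φ₀ := (Finset.mem_filter.mp hφ₀).2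
    refine ⟨fun p l j => if l = φ₀ j p then 1 else 0, ?_, ?_, ?_⟩
    · intro p j
      have h : ∀ l : Fin (n p), ((if l = φ₀ j p then (1:ℝ) else 0)) ^ 2
          = if l = φ₀ j p then 1 else 0 := fun l => by split <;> norm_num
      rw [Finset.sum_congr rfl fun l _ => h l]
      simp
    · intro i j hij
      have hne : φ₀ i ≠ φ₀ j := fun h => hij (hinj₀ h)
      obtain ⟨p, hp⟩ : ∃ p, φ₀ i p ≠ φ₀ j p := by
        by_contra h
        push_neg at h
        exact hne (funext h)
      refine Finset.prod_eq_zero (Finset.mem_univ p) ?_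
      have : ∀ l : Fin (n p), (if l = φ₀ i p then (1:ℝ) else 0) * (if l = φ₀ j p then 1 else 0)
          = if l = φ₀ i p then (if l = φ₀ j p then (1:ℝ) else 0) else 0 := fun l => by
        split <;> simp
      rw [Finset.sum_congr rfl fun l _ => this l]
      simp [hp]
    · rw [← hv₀, hval]
      refine Finset.sum_congr rfl fun j _ => Finset.sum_congr rfl fun r _ =>
        Finset.prod_congr rfl fun p _ => ?_
      have h : ∀ l : Fin (n p), U p l r * ((if l = φ₀ j p then (1:ℝ) else 0)) ^ 2
          = if l = φ₀ j p then U p l r else 0 := fun l => by split <;> norm_num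
      rw [Finset.sum_congr rfl fun l _ => h l]
      simp
  · -- lower bound for the second set
    rintro v ⟨X, hX1, hX2, rfl⟩
    set A : (∀ p : Fin d, Fin (n p)) → ℝ := fun i => ∑ r : Fin R, ∏ p, U p (i p) r with hA
    set c : (∀ p : Fin d, Fin (n p)) → ℝ := fun i => ∑ j : Fin k, (∏ p, X p (i p) j) ^ 2 with hc
    have hc0 : ∀ i, 0 ≤ c i := fun i => Finset.sum_nonneg fun j _ => sq_nonneg _
    have hc1 : ∀ i, c i ≤ 1 := fun i => bessel X hX1 hX2 i
    have hcsum : ∑ i, c i = (k : ℝ) := by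
      rw [hc]
      rw [Finset.sum_comm]
      have : ∀ j : Fin k, ∑ i : (∀ p : Fin d, Fin (n p)), (∏ p, X p (i p) j) ^ 2 = 1 := by
        intro j
        have h1 : ∀ i : (∀ p : Fin d, Fin (n p)), (∏ p, X p (i p) j) ^ 2
            = ∏ p, (X p (i p) j) ^ 2 := fun i => (Finset.prod_pow _ _ _).symm
        rw [Finset.sum_congr rfl fun i _ => h1 i, ← prodsum (fun p l => X p l j ^ 2)]
        simp [hX1]
      rw [Finset.sum_congr rfl fun j _ => this j]
      simp
    have hv : ∑ j : Fin k, ∑ r : Fin R, ∏ p : Fin d, (∑ l, U p l r * (X p l j) ^ 2)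
        = ∑ i, c i * A i := by
      have step1 : ∀ (j : Fin k) (r : Fin R),
          ∏ p : Fin d, (∑ l, U p l r * (X p l j) ^ 2)
          = ∑ i : (∀ p : Fin d, Fin (n p)),
              (∏ p, X p (i p) j) ^ 2 * ∏ p, U p (i p) r := by
        intro j r
        rw [prodsum (fun p l => U p l r * X p l j ^ 2)]
        refine Finset.sum_congr rfl fun i _ => ?_
        rw [Finset.prod_mul_distrib, Finset.prod_pow]
        ring
      calc ∑ j : Fin k, ∑ r : Fin R, ∏ p : Fin d, (∑ l, U p l r * (X p l j) ^ 2)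
          = ∑ j : Fin k, ∑ r : Fin R, ∑ i : (∀ p : Fin d, Fin (n p)),
              (∏ p, X p (i p) j) ^ 2 * ∏ p, U p (i p) r := by
            exact Finset.sum_congr rfl fun j _ => Finset.sum_congr rfl fun r _ => step1 j r
        _ = ∑ j : Fin k, ∑ i : (∀ p : Fin d, Fin (n p)), ∑ r : Fin R,
              (∏ p, X p (i p) j) ^ 2 * ∏ p, U p (i p) r :=
            Finset.sum_congr rfl fun j _ => Finset.sum_comm
        _ = ∑ i : (∀ p : Fin d, Fin (n p)), ∑ j : Fin k, ∑ r : Fin R,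
              (∏ p, X p (i p) j) ^ 2 * ∏ p, U p (i p) r := Finset.sum_comm
        _ = ∑ i, c i * A i := by
            refine Finset.sum_congr rfl fun i _ => ?_
            rw [hc, hA, Finset.sum_mul_sum]
    rw [hv]
    obtain ⟨φ, hinj, hle⟩ := polytope A c k hcard hc0 hc1 hcsum
    have hmle : F.min' hFne ≤ ∑ j, A (φ j) :=
      F.min'_le _ (Finset.mem_image_of_mem _
        (Finset.mem_filter.mpr ⟨Finset.mem_univ _, hinj⟩))
    exact le_trans hmle hle
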